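/- A connected simple graph G on n ≥ 2 vertices has metric dimension n−1 if and only if G is the complete graph K_n. -/
import Mathlib


/-- `W` is a resolving set for `G`: distinct vertices have distinct
distance vectors to the elements of `W`. -/
def IsResolving {V : Type*} (G : SimpleGraph V) (W : Set V) : Prop :=
  ∀ u v : V, (∀ w ∈ W, G.dist u w = G.dist v w) → u = v

/-- The metric dimension of `G`: the minimum cardinality of a resolving set. -/
noncomputable def metricDim {V : Type*} [Fintype V] (G : SimpleGraph V) : ℕ :=
  sInf {n | ∃ W : Finset V, IsResolving G (↑W) ∧ W.card = n}

/-- In a graph with a walk between two nonadjacent distinct vertices, there is a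
"path of length 2 with no chord": vertices `a, m, b` with `a~m`, `m~b`, `a ≠ b`, `¬a~b`. -/
lemma exists_triple {V : Type*} (G : SimpleGraph V) :
    ∀ N (u v : V) (p : G.Walk u v), p.length ≤ N → u ≠ v → ¬ G.Adj u v →
      ∃ a m b : V, G.Adj a m ∧ G.Adj m b ∧ a ≠ b ∧ ¬ G.Adj a b := by
  intro N
  induction N with
  | zero =>
    intro u v p hp huv _
    cases p with
    | nil => exact absurd rfl huv
    | cons h q => simp at hp
  | succ N ih =>
    intro u v p hp huv hadj
    cases p with
    | nil => exact absurd rfl huv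
    | cons h q =>
      rename_i m
      cases q with
      | nil => exact absurd h hadj
      | cons h2 r =>
        rename_i b2
        by_cases hub : u = b2
        · subst hub
          rcases r with _ | ⟨h3, r'⟩
          · exact absurd rfl huv
          · rename_i c
            -- walk u → v via edge h3 : Adj u c and r' : c → v
            by_cases hadj2 : G.Adj u v
            · exact absurd hadj2 hadj
            · exact ih u v (SimpleGraph.Walk.cons h3 r')
                (by simp at hp ⊢; omega) huv hadj
        · by_cases hab : G.Adj u b2
          · exact ih u v (SimpleGraph.Walk.cons hab r)
              (by simp at hp ⊢; omega) huv hadj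
          · exact ⟨u, m, b2, h, h2, hub, hab⟩

theorem metricDim_eq_card_sub_one_iff_complete {V : Type*} [Fintype V] (n : ℕ) (hn : 2 ≤ n)
    (hcard : Fintype.card V = n) (G : SimpleGraph V) (hG : G.Connected) :
    metricDim G = n - 1 ↔ G = ⊤ := by
  classical
  constructor
  · -- contrapositive: if G ≠ ⊤ then metricDim ≤ n - 2 < n - 1
    intro hdim
    by_contra hne
    -- get nonadjacent distinct u, v
    have : ∃ u v : V, u ≠ v ∧ ¬ G.Adj u v := by
      by_contra hc
      push_neg at hc
      apply hne
      ext u v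
      simp only [SimpleGraph.top_adj]
      constructor
      · exact fun h => G.ne_of_adj h
      · intro h; exact hc u v h
    obtain ⟨u, v, huv, hadj⟩ := this
    obtain ⟨p⟩ := hG.preconnected u v
    obtain ⟨a, m, b, ham, hmb, hab, hnadj⟩ :=
      exists_triple G p.length u v p le_rfl huv hadj
    have ham' : a ≠ m := G.ne_of_adj ham
    have hmb' : m ≠ b := G.ne_of_adj hmb
    set W : Finset V := (Finset.univ.erase a).erase m with hW
    have hbW : b ∈ W := by
      simp [hW, Finset.mem_erase, hmb'.symm, hab.symm]
    have hres : IsResolving G (↑W) := by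
      intro x y hxy
      by_contra hxyne
      have key : ∀ z : V, z ∈ W → z = x ∨ z = y → False := by
        intro z hz hzxy
        have := hxy z hz
        rcases hzxy with rfl | rfl
        · rw [SimpleGraph.dist_self] at this
          exact hxyne ((hG.dist_eq_zero_iff).mp this.symm).symm
        · rw [SimpleGraph.dist_self] at this
          exact hxyne (hG.dist_eq_zero_iff.mp this)
      have hx : x = a ∨ x = m := by
        by_contra hx
        push_neg at hx
        exact key x (by simp [hW, Finset.mem_erase, hx.1, hx.2]) (Or.inl rfl)
      have hy : y = a ∨ y = m := by
        by_contra hy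
        push_neg at hy
        exact key y (by simp [hW, Finset.mem_erase, hy.1, hy.2]) (Or.inr rfl)
      have hmb1 : G.dist m b = 1 := SimpleGraph.dist_eq_one_iff_adj.mpr hmb
      have hab1 : G.dist a b ≠ 1 := fun h => hnadj (SimpleGraph.dist_eq_one_iff_adj.mp h)
      have := hxy b hbW
      rcases hx with rfl | rfl <;> rcases hy with rfl | rfl
      · exact hxyne rfl
      · rw [hmb1] at this; exact hab1 this
      · rw [hmb1] at this; exact hab1 this.symm
      · exact hxyne rfl
    have hcardW : W.card = n - 2 := by
      have hma : m ∈ Finset.univ.erase a := by simp [ham'.symm]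
      rw [hW, Finset.card_erase_of_mem hma, Finset.card_erase_of_mem (Finset.mem_univ a)]
      simp only [Finset.card_univ, hcard]; omega
    have hle : metricDim G ≤ n - 2 :=
      Nat.sInf_le ⟨W, hres, hcardW⟩
    omega
  · -- G = ⊤ : metricDim = n - 1
    rintro rfl
    have hVnonempty : Nonempty V := by
      rw [← Fintype.card_pos_iff]; omega
    obtain ⟨x⟩ := hVnonempty
    have htopdist : ∀ u w : V, u ≠ w → (⊤ : SimpleGraph V).dist u w = 1 := by
      intro u w huw
      exact SimpleGraph.dist_eq_one_iff_adj.mpr (by simpa using huw)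
    apply le_antisymm
    · -- sInf ≤ n - 1 via W = univ.erase x
      apply Nat.sInf_le
      refine ⟨Finset.univ.erase x, ?_, by simp [hcard]⟩
      intro u v huv
      by_contra hne
      by_cases hu : u = x
      · have hv : v ∈ Finset.univ.erase x := by
          simp [Finset.mem_erase]
          intro h; exact hne (hu.trans h.symm)
        have := huv v hv
        rw [SimpleGraph.dist_self] at this
        exact hne (hG.dist_eq_zero_iff.mp this)
      · have hu' : u ∈ Finset.univ.erase x := by simp [Finset.mem_erase, hu]
        have := huv u hu'
        rw [SimpleGraph.dist_self] at this
        exact hne (hG.dist_eq_zero_iff.mp this.symm).symm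
    · -- n - 1 ≤ sInf
      apply le_csInf
      · exact ⟨n - 1, Finset.univ.erase x, by
          intro u v huv
          by_contra hne
          by_cases hu : u = x
          · have hv : v ∈ Finset.univ.erase x := by
              simp [Finset.mem_erase]
              intro h; exact hne (hu.trans h.symm)
            have := huv v hv
            rw [SimpleGraph.dist_self] at this
            exact hne (hG.dist_eq_zero_iff.mp this)
          · have hu' : u ∈ Finset.univ.erase x := by simp [Finset.mem_erase, hu]
            have := huv u hu'
            rw [SimpleGraph.dist_self] at this
            exact hne (hG.dist_eq_zero_iff.mp this.symm).symm,
          by simp [hcard]⟩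
      · rintro k ⟨W, hres, rfl⟩
        by_contra hlt
        push_neg at hlt
        -- W.card ≤ n - 2, so complement has ≥ 2 elements
        have hcompl : 2 ≤ (Wᶜ : Finset V).card := by
          rw [Finset.card_compl, hcard]
          omega
        obtain ⟨u, hu, v, hv, huv⟩ := Finset.one_lt_card.mp hcompl
        apply huv
        apply hres u v
        intro w hw
        have hwW : w ∈ W := hw
        have huw : u ≠ w := fun h => (Finset.mem_compl.mp hu) (h ▸ hwW)
        have hvw : v ≠ w := fun h => (Finset.mem_compl.mp hv) (h ▸ hwW)
        rw [htopdist u w huw, htopdist v w hvw]
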